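/- In the constructed instance for sacrificing return for less volatility, for every time t with P < t ≤ f, the market volatility satisfies Δ(M,t) > (2/β)·ln k. -/

import Mathlib

/-- Price-weighted index of the set of stocks `T` at time `t`,
given prices `Sp`. -/
noncomputable def phi1 (Sp : ℕ → ℕ → ℝ) (T : Finset ℕ) (t : ℕ) : ℝ :=
  (∑ i ∈ T, Sp i t) / T.card

/-- One-period return of the set of stocks `T` at time `t ≥ 1`. -/
noncomputable def ret (Sp : ℕ → ℕ → ℝ) (T : Finset ℕ) (t : ℕ) : ℝ :=
  Real.log (phi1 Sp T t / phi1 Sp T (t - 1))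

/-- Average return of the set of stocks `T` up to time `t ≥ 1`. -/
noncomputable def avgRet (Sp : ℕ → ℕ → ℝ) (T : Finset ℕ) (t : ℕ) : ℝ :=
  (∑ i ∈ Finset.Icc 1 t, ret Sp T i) / t

/-- Volatility of the set of stocks `T` up to time `t ≥ 2`. -/
noncomputable def vol (Sp : ℕ → ℕ → ℝ) (T : Finset ℕ) (t : ℕ) : ℝ :=
  Real.sqrt ((∑ i ∈ Finset.Icc 1 t, (ret Sp T i - avgRet Sp T t) ^ 2) /
    ((t : ℝ) - 1))

lemma pair_sum_ge (g : ℕ → ℝ) (c : ℝ) :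
    ∀ N : ℕ, (∀ j < N, c ≤ g (2*j) + g (2*j+1)) →
      (N : ℝ) * c ≤ ∑ i ∈ Finset.range (2*N), g i := by
  intro N
  induction N with
  | zero => intro _; simp
  | succ N ih =>
    intro h
    have h2 : 2*(N+1) = 2*N + 1 + 1 := by ring
    rw [h2, Finset.sum_range_succ, Finset.sum_range_succ]
    have H1 := ih (fun j hj => h j (hj.trans (Nat.lt_succ_self N)))
    have H2 := h N (Nat.lt_succ_self N)
    push_cast
    nlinarith

theorem stmt_10
    -- the minimum-cover instance
    (s n K : ℕ) (hs : 1 ≤ s) (C : ℕ → Finset ℕ)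
    (hC : ∀ i ∈ Finset.Icc 1 n, C i ⊆ Finset.Icc 1 s)
    (hK2 : 2 ≤ K) (hKn : K < n)
    -- the performance and volatility parameters
    (α β : ℝ) (hα : 0 < α) (hβ : 0 < β)
    -- constants of the construction
    (k P q B m f : ℕ) (hk : k = K)
    (hP : P = max (2 * (k + 1)) (2 * s))
    (hq : (q : ℤ) = ⌈max (1 + 4 / β) (Real.log (2 / α) / Real.log k)⌉)
    (hB : (B : ℤ) = ⌈α * (k : ℝ) ^ q⌉)
    (hm : m = n * B) (hf : f = P + s)
    (v₁ v₂ : ℝ) (hv₁ : v₁ = (B : ℝ) - 1) (hv₂ : v₂ = (k : ℝ) * ((B : ℝ) - 1))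
    -- the constructed prices
    (Sp : ℕ → ℕ → ℝ)
    (h0 : ∀ i ∈ Finset.Icc 1 m, Sp i 0 = v₁)
    (hpad1 : ∀ t, 1 ≤ t → t ≤ P → ∀ i ∈ Finset.Icc 1 n, Sp i t = v₁)
    (hpadEven : ∀ t, 1 ≤ t → t ≤ P → t % 2 = 0 →
      Sp (min (n + t / 2) m) t =
        ((m : ℝ) - n) * ((⌊(B : ℝ) / α⌋ : ℤ) - 1) ∧
      ∀ i, n < i → i ≤ m → i ≠ min (n + t / 2) m → Sp i t = 0)
    (hpadOdd : ∀ t, 1 ≤ t → t ≤ P → t % 2 = 1 →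
      ∀ i, n < i → i ≤ m → Sp i t = 0)
    (hcode : ∀ t, P < t → t ≤ f →
      (∀ i ∈ Finset.Icc 1 n, Sp i t = if t - P ∈ C i then v₂ else 0) ∧
      (∀ i, n < i → i < m → Sp i t = 0) ∧
      Sp m t = ((m : ℝ) - n) * ((⌊(B : ℝ) / α⌋ : ℤ) - (k : ℝ)) +
        (((Finset.Icc 1 n).filter (fun i => t - P ∉ C i)).card : ℝ) * v₂) :
    -- statement 10
    ∀ t, P < t → t ≤ f →
      vol Sp (Finset.Icc 1 m) t > (2 / β) * Real.log k := by

  intro t htP htf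
  -- basic numeric facts
  have hk2 : 2 ≤ k := hk ▸ hK2
  have hn : 3 ≤ n := by omega
  have hkR : (2:ℝ) ≤ (k:ℝ) := by exact_mod_cast hk2
  have hlogk : 0 < Real.log k := Real.log_pos (by linarith)
  have hqmax : max (1 + 4 / β) (Real.log (2 / α) / Real.log k) ≤ (q:ℝ) := by
    have h1 := Int.le_ceil (max (1 + 4 / β) (Real.log (2 / α) / Real.log k))
    rw [← hq] at h1
    exact_mod_cast h1
  have hq1 : (1 + 4/β) ≤ (q:ℝ) := le_trans (le_max_left _ _) hqmax
  have hq2 : Real.log (2/α) / Real.log k ≤ (q:ℝ) := le_trans (le_max_right _ _) hqmax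
  have hqn : 1 ≤ q := by
    by_contra hcon
    have : q = 0 := by omega
    rw [this] at hq1
    have h4β : 0 < 4/β := by positivity
    norm_num at hq1
    linarith
  have hkqpos : (0:ℝ) < (k:ℝ)^q := by positivity
  have hkq2 : (2:ℝ) ≤ (k:ℝ)^q :=
    le_trans hkR (le_self_pow₀ (by linarith) (by omega))
  have hkqα : (2:ℝ)/α ≤ (k:ℝ)^q := by
    have h1 : Real.log (2/α) ≤ (q:ℝ) * Real.log k := by
      rw [div_le_iff₀ hlogk] at hq2; linarith
    have h2 : Real.log (2/α) ≤ Real.log ((k:ℝ)^q) := by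
      rw [Real.log_pow]; push_cast; linarith
    exact (Real.log_le_log_iff (by positivity) hkqpos).mp h2
  have hBα : α * (k:ℝ)^q ≤ (B:ℝ) := by
    have h1 := Int.le_ceil (α * (k:ℝ)^q)
    rw [← hB] at h1
    exact_mod_cast h1
  have hB2 : (2:ℝ) ≤ (B:ℝ) := by
    have h1 : α * ((2:ℝ)/α) ≤ α * (k:ℝ)^q := by
      exact mul_le_mul_of_nonneg_left hkqα hα.le
    rw [mul_div_cancel₀ _ (ne_of_gt hα)] at h1
    linarith
  have hBn : 2 ≤ B := by exact_mod_cast hB2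
  -- the floor value D
  set D : ℝ := ((⌊(B:ℝ)/α⌋ : ℤ) : ℝ) with hD
  have hDk : (k:ℝ)^q ≤ D := by
    have h2 : (k:ℤ)^q ≤ ⌊(B:ℝ)/α⌋ := Int.le_floor.mpr (by
      push_cast
      rw [le_div_iff₀ hα]
      linarith [hBα])
    rw [hD]
    exact_mod_cast h2
  have hD2 : (2:ℝ) ≤ D := le_trans hkq2 hDk
  -- market facts
  have hmn : n + 1 ≤ m := by
    have h1 : n * 2 ≤ n * B := Nat.mul_le_mul_left n hBn
    omega
  have hm0 : 0 < m := by omega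
  have hv1 : (0:ℝ) < v₁ := by rw [hv₁]; linarith
  have hmR : (m:ℝ) = (n:ℝ) * (B:ℝ) := by rw [hm]; push_cast; ring
  have hmnv : (m:ℝ) - (n:ℝ) = (n:ℝ) * v₁ := by rw [hv₁, hmR]; ring
  have hnR : (0:ℝ) < (n:ℝ) := by positivity
  have hmRpos : (0:ℝ) < (m:ℝ) := by positivity
  set M := Finset.Icc 1 m with hM
  have hsplit : ∀ t', ∑ i ∈ M, Sp i t' =
      (∑ i ∈ Finset.Icc 1 n, Sp i t') + ∑ i ∈ Finset.Ioc n m, Sp i t' := by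
    intro t'
    rw [hM, show Finset.Icc 1 m = Finset.Ioc 0 m from by rw [← Finset.Icc_add_one_left_eq_Ioc]; rfl,
      show Finset.Icc 1 n = Finset.Ioc 0 n from by rw [← Finset.Icc_add_one_left_eq_Ioc]; rfl,
      ← Finset.sum_Ioc_consecutive _ (Nat.zero_le n) (by omega : n ≤ m)]
  have hfront : ∀ t', 1 ≤ t' → t' ≤ P → ∑ i ∈ Finset.Icc 1 n, Sp i t' = (n:ℝ) * v₁ := by
    intro t' h1 h2
    rw [Finset.sum_congr rfl (fun i hi => hpad1 t' h1 h2 i hi), Finset.sum_const,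
      Nat.card_Icc, nsmul_eq_mul]
    norm_num
  have hSodd : ∀ t', 1 ≤ t' → t' ≤ P → t' % 2 = 1 → ∑ i ∈ M, Sp i t' = (n:ℝ) * v₁ := by
    intro t' h1 h2 h3
    rw [hsplit, hfront t' h1 h2,
      Finset.sum_eq_zero (fun i hi => by
        rw [Finset.mem_Ioc] at hi
        exact hpadOdd t' h1 h2 h3 i hi.1 hi.2)]
    ring
  have hSeven : ∀ t', 1 ≤ t' → t' ≤ P → t' % 2 = 0 → ∑ i ∈ M, Sp i t' = (n:ℝ) * v₁ * D := by
    intro t' h1 h2 h3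
    obtain ⟨hval, hzero⟩ := hpadEven t' h1 h2 h3
    have hj0m : min (n + t'/2) m ∈ Finset.Ioc n m := by
      rw [Finset.mem_Ioc]
      omega
    have hback : ∑ i ∈ Finset.Ioc n m, Sp i t' = ((m:ℝ) - n) * (D - 1) := by
      rw [Finset.sum_eq_single (min (n + t'/2) m)
        (fun b hb hbne => by
          rw [Finset.mem_Ioc] at hb
          exact hzero b hb.1 hb.2 hbne)
        (fun hnotin => absurd hj0m hnotin)]
      exact hval
    rw [hsplit, hfront t' h1 h2, hback, hmnv]
    ring
  -- index values and returns
  have hΦodd : ∀ t', 1 ≤ t' → t' ≤ P → t' % 2 = 1 →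
      phi1 Sp M t' = (n:ℝ) * v₁ / m := by
    intro t' h1 h2 h3
    rw [phi1, hSodd t' h1 h2 h3, hM, Nat.card_Icc]
    norm_num
  have hΦeven : ∀ t', 1 ≤ t' → t' ≤ P → t' % 2 = 0 →
      phi1 Sp M t' = ((n:ℝ) * v₁ / m) * D := by
    intro t' h1 h2 h3
    rw [phi1, hSeven t' h1 h2 h3, hM, Nat.card_Icc]
    norm_num
    ring
  have hVo : (0:ℝ) < (n:ℝ) * v₁ / m := by positivity
  have hretE : ∀ i, 2 ≤ i → i ≤ P → i % 2 = 0 → ret Sp M i = Real.log D := by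
    intro i h1 h2 h3
    rw [ret, hΦeven i (by omega) h2 h3, hΦodd (i-1) (by omega) (by omega) (by omega),
      mul_comm ((n:ℝ) * v₁ / m) D, mul_div_assoc, div_self (ne_of_gt hVo), mul_one]
  have hretO : ∀ i, 3 ≤ i → i ≤ P → i % 2 = 1 → ret Sp M i = - Real.log D := by
    intro i h1 h2 h3
    rw [ret, hΦodd i (by omega) h2 h3, hΦeven (i-1) (by omega) (by omega) (by omega)]
    rw [show (n:ℝ) * v₁ / m / ((n:ℝ) * v₁ / m * D) = D⁻¹ from by
      field_simp]
    exact Real.log_inv D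
  -- parity and size of P
  have hPeven : P % 2 = 0 := by
    rcases Nat.le_total (2*(k+1)) (2*s) with h | h
    · rw [hP, max_eq_right h]; omega
    · rw [hP, max_eq_left h]; omega
  have hP6 : 6 ≤ P := by
    have := le_max_left (2*(k+1)) (2*s)
    rw [← hP] at this
    omega
  have hPs : 2*s ≤ P := by
    have := le_max_right (2*(k+1)) (2*s)
    rw [← hP] at this
    omega
  -- the key lower bound on the sum of squared deviations
  set L := Real.log D with hLdef
  have hLk : (1 + 4/β) * Real.log k ≤ L := by
    have h1 : (q:ℝ) * Real.log k ≤ L := by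
      rw [hLdef, ← Real.log_pow]
      exact Real.log_le_log hkqpos hDk
    have h2 : (1 + 4/β) * Real.log k ≤ (q:ℝ) * Real.log k :=
      mul_le_mul_of_nonneg_right hq1 hlogk.le
    linarith
  set x := avgRet Sp M t with hx
  set N := P/2 - 1 with hN
  have hN2 : 2*N = P - 2 := by omega
  have key : ∀ j < N, 2*L^2 ≤
      (fun i => (ret Sp M (2+i) - x)^2) (2*j) + (fun i => (ret Sp M (2+i) - x)^2) (2*j+1) := by
    intro j hj
    simp only
    have hE : ret Sp M (2+2*j) = L := hretE (2+2*j) (by omega) (by omega) (by omega)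
    have hO : ret Sp M (2+(2*j+1)) = -L := hretO (2+(2*j+1)) (by omega) (by omega) (by omega)
    rw [hE, hO]
    have hexp : (L - x)^2 + (-L - x)^2 = 2*L^2 + 2*x^2 := by ring
    have hx2 := sq_nonneg x
    linarith
  have hsum1 : (N:ℝ) * (2*L^2) ≤ ∑ i ∈ Finset.range (2*N), (ret Sp M (2+i) - x)^2 :=
    pair_sum_ge _ _ N key
  have hsum2 : ∑ i ∈ Finset.range (2*N), (ret Sp M (2+i) - x)^2
      = ∑ i ∈ Finset.Icc 2 (P-1), (ret Sp M i - x)^2 := by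
    rw [show Finset.Icc 2 (P-1) = Finset.Ico 2 P from by
        rw [← Finset.Ico_add_one_right_eq_Icc]; congr 1; omega,
      Finset.sum_Ico_eq_sum_range, show P - 2 = 2*N from hN2.symm]
  have hsub : Finset.Icc 2 (P-1) ⊆ Finset.Icc 1 t :=
    Finset.Icc_subset_Icc (by omega) (by omega)
  have hsum3 : ∑ i ∈ Finset.Icc 2 (P-1), (ret Sp M i - x)^2
      ≤ ∑ i ∈ Finset.Icc 1 t, (ret Sp M i - x)^2 :=
    Finset.sum_le_sum_of_subset_of_nonneg hsub (fun i _ _ => sq_nonneg _)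
  have hSig : (N:ℝ) * (2*L^2) ≤ ∑ i ∈ Finset.Icc 1 t, (ret Sp M i - x)^2 := by
    calc (N:ℝ) * (2*L^2) ≤ ∑ i ∈ Finset.range (2*N), (ret Sp M (2+i) - x)^2 := hsum1
      _ = ∑ i ∈ Finset.Icc 2 (P-1), (ret Sp M i - x)^2 := hsum2
      _ ≤ ∑ i ∈ Finset.Icc 1 t, (ret Sp M i - x)^2 := hsum3
  -- final numeric estimate
  have ht7 : 7 ≤ t := by omega
  have htR : (7:ℝ) ≤ (t:ℝ) := by exact_mod_cast ht7
  have ht1 : (0:ℝ) < (t:ℝ) - 1 := by linarith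
  have htPs : (t:ℝ) ≤ (P:ℝ) + (s:ℝ) := by
    have : t ≤ P + s := by omega
    exact_mod_cast this
  have hsP : 2*(s:ℝ) ≤ (P:ℝ) := by exact_mod_cast hPs
  have hPR : (6:ℝ) ≤ (P:ℝ) := by exact_mod_cast hP6
  have hNR : 2*(N:ℝ) = (P:ℝ) - 2 := by
    have h1 : (2*N : ℕ) = P - 2 := hN2
    have h2 : ((2*N : ℕ) : ℝ) = ((P - 2 : ℕ) : ℝ) := by rw [h1]
    push_cast [Nat.cast_sub (by omega : 2 ≤ P)] at h2
    linarith
  set G := Real.log k with hG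
  set w := 4/β * G with hw
  have hwpos : 0 < w := by rw [hw]; positivity
  have hwL : w ≤ L := by
    have : (1 + 4/β) * G = G + w := by rw [hw]; ring
    rw [this] at hLk
    linarith
  have hL2 : w^2 ≤ L^2 := pow_le_pow_left₀ hwpos.le hwL 2
  have hgoal2 : ((2/β) * G)^2 < (∑ i ∈ Finset.Icc 1 t, (ret Sp M i - x)^2) / ((t:ℝ) - 1) := by
    rw [lt_div_iff₀ ht1]
    have heq : (2/β) * G = w/2 := by rw [hw]; ring
    rw [heq]
    have ht4 : (t:ℝ) - 1 < 4 * ((P:ℝ) - 2) := by linarith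
    have hstep1 : (w/2)^2 * ((t:ℝ) - 1) < (w/2)^2 * (4 * ((P:ℝ) - 2)) := by
      apply mul_lt_mul_of_pos_left ht4
      positivity
    have hstep2 : (w/2)^2 * (4 * ((P:ℝ) - 2)) = ((P:ℝ) - 2) * w^2 := by ring
    have hstep3 : ((P:ℝ) - 2) * w^2 ≤ ((P:ℝ) - 2) * L^2 :=
      mul_le_mul_of_nonneg_left hL2 (by linarith)
    have hstep4 : ((P:ℝ) - 2) * L^2 = (N:ℝ) * (2*L^2) := by rw [← hNR]; ring
    calc (w/2)^2 * ((t:ℝ) - 1) < (w/2)^2 * (4 * ((P:ℝ) - 2)) := hstep1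
      _ = ((P:ℝ) - 2) * w^2 := hstep2
      _ ≤ ((P:ℝ) - 2) * L^2 := hstep3
      _ = (N:ℝ) * (2*L^2) := hstep4
      _ ≤ _ := hSig
  have hnn : 0 ≤ (2/β) * G := by positivity
  rw [vol]
  exact (Real.lt_sqrt hnn).mpr hgoal2
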